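/- arXiv:1407.7578 — 2 statements merged into one kernel-verified Lean document; each statement's English description precedes it below -/
import Mathlib

section
/- The number of factorizations of the full cycle (1 2 ... d) in S(d) into a product of d-1 transpositions τ₁τ₂⋯τ_{d-1} that are monotone — meaning that if τᵢ = (sᵢ tᵢ) with sᵢ < tᵢ, then t₁ ≤ t₂ ≤ ... ≤ t_{d-1} — is the Catalan number C_{d-1} = (1/d)·binom(2(d-1), d-1). -/
open List

namespace MonoFac

/-- Product of the swaps of a list of pairs of naturals. -/
def P (l : List (ℕ × ℕ)) : Equiv.Perm ℕ := (l.map fun p => Equiv.swap p.1 p.2).prod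

@[simp] lemma P_nil : P [] = 1 := rfl

lemma P_cons (e : ℕ × ℕ) (l : List (ℕ × ℕ)) :
    P (e :: l) = Equiv.swap e.1 e.2 * P l := by simp [P]

lemma P_append (l₁ l₂ : List (ℕ × ℕ)) : P (l₁ ++ l₂) = P l₁ * P l₂ := by
  simp [P]

lemma P_fix {l : List (ℕ × ℕ)} {x : ℕ} (h : ∀ p ∈ l, p.1 ≠ x ∧ p.2 ≠ x) :
    P l x = x := by
  induction l with
  | nil => rfl
  | cons e l ih =>
      rw [P_cons]
      have hx := h e mem_cons_self
      have : P l x = x := ih fun p hp => h p (mem_cons_of_mem _ hp)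
      simp only [Equiv.Perm.mul_apply, this]
      exact Equiv.swap_apply_of_ne_of_ne (Ne.symm hx.1) (Ne.symm hx.2)

lemma P_ge {l : List (ℕ × ℕ)} {k : ℕ} (h : ∀ p ∈ l, k ≤ p.1 ∧ k ≤ p.2) {x : ℕ}
    (hx : k ≤ x) : k ≤ P l x := by
  induction l with
  | nil => simpa using hx
  | cons e l ih =>
      rw [P_cons]
      have he := h e mem_cons_self
      have h' : k ≤ P l x := ih fun p hp => h p (mem_cons_of_mem _ hp)
      simp only [Equiv.Perm.mul_apply]
      rcases eq_or_ne (P l x) e.1 with h1 | h1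
      · rw [h1, Equiv.swap_apply_left]; exact he.2
      rcases eq_or_ne (P l x) e.2 with h2 | h2
      · rw [h2, Equiv.swap_apply_right]; exact he.1
      · rwa [Equiv.swap_apply_of_ne_of_ne h1 h2]

/-- The symmetric step relation of an edge list. -/
def Step (l : List (ℕ × ℕ)) (x y : ℕ) : Prop := (x, y) ∈ l ∨ (y, x) ∈ l

/-- Reachability via edges of `l`. -/
def Reach (l : List (ℕ × ℕ)) : ℕ → ℕ → Prop := Relation.ReflTransGen (Step l)

lemma Step.symm' {l : List (ℕ × ℕ)} {x y : ℕ} (h : Step l x y) : Step l y x := h.symm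

lemma reach_refl (l : List (ℕ × ℕ)) (x : ℕ) : Reach l x x := Relation.ReflTransGen.refl

lemma Reach.trans' {l : List (ℕ × ℕ)} {x y z : ℕ} (h : Reach l x y) (h' : Reach l y z) :
    Reach l x z := Relation.ReflTransGen.trans h h'

lemma Reach.symm' {l : List (ℕ × ℕ)} {x y : ℕ} (h : Reach l x y) : Reach l y x := by
  haveI : Std.Symm (Step l) := ⟨fun a b hab => hab.symm⟩
  exact (Relation.ReflTransGen.stdSymm (r := Step l)).symm _ _ h

lemma reach_mono {l₁ l₂ : List (ℕ × ℕ)} (h : ∀ p ∈ l₁, p ∈ l₂) {x y : ℕ}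
    (hr : Reach l₁ x y) : Reach l₂ x y := by
  refine Relation.ReflTransGen.mono ?_ _ _ hr
  intro a b hab
  rcases hab with hab | hab
  · exact Or.inl (h _ hab)
  · exact Or.inr (h _ hab)

lemma step_of_mem {l : List (ℕ × ℕ)} {p : ℕ × ℕ} (hp : p ∈ l) : Step l p.1 p.2 :=
  Or.inl (by simpa using hp)

lemma reach_P (l : List (ℕ × ℕ)) (x : ℕ) : Reach l x (P l x) := by
  induction l with
  | nil => simpa using reach_refl [] x
  | cons e l ih =>
      have h1 : Reach (e :: l) x (P l x) :=
        reach_mono (fun p hp => mem_cons_of_mem _ hp) ih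
      refine h1.trans' ?_
      rw [P_cons]
      simp only [Equiv.Perm.mul_apply]
      rcases eq_or_ne (P l x) e.1 with h | h
      · rw [h, Equiv.swap_apply_left]
        exact Relation.ReflTransGen.single (Or.inl (by simpa using mem_cons_self e l))
      rcases eq_or_ne (P l x) e.2 with h2 | h2
      · rw [h2, Equiv.swap_apply_right]
        exact Relation.ReflTransGen.single (Or.inr (by simpa using mem_cons_self e l))
      · rw [Equiv.swap_apply_of_ne_of_ne h h2]
        exact reach_refl _ _

lemma reach_nil {x y : ℕ} (h : Reach [] x y) : x = y := by
  induction h with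
  | refl => rfl
  | tail _ s ih =>
      rcases s with s | s <;> simp at s


open Classical in
lemma reach_decomp {e : ℕ × ℕ} {l' : List (ℕ × ℕ)} {u v : ℕ}
    (h : Reach (e :: l') u v) :
    Reach l' u v ∨ ((Reach l' u e.1 ∨ Reach l' u e.2) ∧ (Reach l' e.1 v ∨ Reach l' e.2 v)) := by
  induction h with
  | refl => exact Or.inl (reach_refl _ _)
  | @tail b c hb s ih =>
      rcases s with s | s
      · rcases (mem_cons.mp s) with rfl | s'
        · -- the new edge, (b, c) = e
          rcases ih with h1 | ⟨h1, _⟩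
          · exact Or.inr ⟨Or.inl h1, Or.inr (reach_refl _ _)⟩
          · exact Or.inr ⟨h1, Or.inr (reach_refl _ _)⟩
        · have hst : Step l' b c := Or.inl s'
          rcases ih with h1 | ⟨h1, h2⟩
          · exact Or.inl (h1.tail hst)
          · refine Or.inr ⟨h1, ?_⟩
            rcases h2 with h2 | h2
            · exact Or.inl (h2.tail hst)
            · exact Or.inr (h2.tail hst)
      · rcases (mem_cons.mp s) with he | s'
        · -- (c, b) = e, so b = e.2, c = e.1
          have hb2 : b = e.2 := by rw [← he]
          have hc1 : c = e.1 := by rw [← he]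
          subst hb2; subst hc1
          rcases ih with h1 | ⟨h1, _⟩
          · exact Or.inr ⟨Or.inr h1, Or.inl (reach_refl _ _)⟩
          · exact Or.inr ⟨h1, Or.inl (reach_refl _ _)⟩
        · have hst : Step l' b c := Or.inr s'
          rcases ih with h1 | ⟨h1, h2⟩
          · exact Or.inl (h1.tail hst)
          · refine Or.inr ⟨h1, ?_⟩
            rcases h2 with h2 | h2
            · exact Or.inl (h2.tail hst)
            · exact Or.inr (h2.tail hst)

open Classical in
/-- Paths between points in the class of `w` only use edges whose first endpoint is
in the class of `w`. -/
lemma reach_filter {l' : List (ℕ × ℕ)} {w u v : ℕ}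
    (hu : Reach l' w u) (h : Reach l' u v) :
    Reach (l'.filter fun f => decide (Reach l' w f.1)) u v := by
  induction h with
  | refl => exact reach_refl _ _
  | @tail b c hb s ih =>
      have hwb : Reach l' w b := hu.trans' hb
      refine ih.tail ?_
      rcases s with s | s
      · refine Or.inl (mem_filter.mpr ⟨s, ?_⟩)
        simpa using hwb
      · refine Or.inr (mem_filter.mpr ⟨s, ?_⟩)
        simp only [decide_eq_true_eq]
        exact hwb.tail (Or.inr s)

lemma card_le_one_of_reach_nil {S : Finset ℕ} (hS : ∀ x ∈ S, ∀ y ∈ S, Reach [] x y) :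
    S.card ≤ 1 :=
  Finset.card_le_one.mpr fun a ha b hb => reach_nil (hS a ha b hb)

open Classical in
lemma reach_card : ∀ (l : List (ℕ × ℕ)) (S : Finset ℕ),
    (∀ x ∈ S, ∀ y ∈ S, Reach l x y) → S.card ≤ l.length + 1 := by
  suffices H : ∀ (n : ℕ) (l : List (ℕ × ℕ)), l.length ≤ n → ∀ (S : Finset ℕ),
      (∀ x ∈ S, ∀ y ∈ S, Reach l x y) → S.card ≤ l.length + 1 by
    exact fun l S h => H l.length l le_rfl S h
  intro n
  induction n with
  | zero =>
      intro l hl S hS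
      have : l = [] := List.length_eq_zero_iff.mp (Nat.le_zero.mp hl)
      subst this
      simpa using card_le_one_of_reach_nil hS
  | succ n ih =>
      intro l hl S hS
      match l with
      | [] => simpa using card_le_one_of_reach_nil hS
      | e :: l' =>
        have hl' : l'.length ≤ n := by simpa using hl
        rcases S.eq_empty_or_nonempty with rfl | ⟨x₀, hx₀⟩
        · simp
        by_cases hc : Reach l' x₀ e.1 ∨ Reach l' x₀ e.2
        · by_cases h12 : Reach l' e.1 e.2 ∨ Reach l' e.2 e.1
          · -- everything is in one l'-class
            have hone : ∀ y ∈ S, Reach l' x₀ y := by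
              intro y hy
              have h12' : Reach l' e.1 e.2 := by
                rcases h12 with h | h
                · exact h
                · exact h.symm'
              have hx1 : Reach l' x₀ e.1 := by
                rcases hc with h | h
                · exact h
                · exact h.trans' h12'.symm'
              rcases reach_decomp (hS x₀ hx₀ y hy) with h1 | ⟨_, h2⟩
              · exact h1
              · rcases h2 with h2 | h2
                · exact hx1.trans' h2
                · exact hx1.trans' (h12'.trans' h2)
            have : ∀ x ∈ S, ∀ y ∈ S, Reach l' x y := fun x hx y hy =>
              (hone x hx).symm'.trans' (hone y hy)
            calc S.card ≤ l'.length + 1 := ih l' hl' S this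
              _ ≤ (e :: l').length + 1 := by simp
          · -- two distinct classes: those of e.1 and e.2
            push_neg at h12
            set S₁ := S.filter (fun x => Reach l' e.1 x) with hS₁def
            set S₂ := S.filter (fun x => ¬ Reach l' e.1 x) with hS₂def
            have hmem2 : ∀ x ∈ S₂, Reach l' e.2 x := by
              intro x hx
              have hxS := (Finset.mem_filter.mp hx).1
              have hxn := (Finset.mem_filter.mp hx).2
              rcases reach_decomp (hS x₀ hx₀ x hxS) with h1 | ⟨_, h2⟩
              · -- x₀ ~ x via l'
                rcases hc with h | h
                · exact absurd (h.symm'.trans' h1) hxn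
                · exact h.symm'.trans' h1
              · rcases h2 with h2 | h2
                · exact absurd h2 hxn
                · exact h2
            have hmem1 : ∀ x ∈ S₁, Reach l' e.1 x := fun x hx =>
              (Finset.mem_filter.mp hx).2
            set lA := l'.filter (fun f => decide (Reach l' e.1 f.1)) with hlAdef
            set lB := l'.filter (fun f => !decide (Reach l' e.1 f.1)) with hlBdef
            have hlen : lA.length + lB.length = l'.length :=
              (List.length_eq_length_filter_add (l := l') (fun f : ℕ × ℕ => decide (Reach l' e.1 f.1))).symm
            -- class S₁ connected using lA
            have hA : ∀ x ∈ S₁, ∀ y ∈ S₁, Reach lA x y := by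
              intro x hx y hy
              exact reach_filter (hmem1 x hx) ((hmem1 x hx).symm'.trans' (hmem1 y hy))
            -- class S₂ connected using lB
            have hB : ∀ x ∈ S₂, ∀ y ∈ S₂, Reach lB x y := by
              intro x hx y hy
              have h2 := reach_filter (hmem2 x hx) ((hmem2 x hx).symm'.trans' (hmem2 y hy))
              refine reach_mono ?_ h2
              intro f hf
              have hf1 := mem_filter.mp hf
              refine mem_filter.mpr ⟨hf1.1, ?_⟩
              simp only [Bool.not_eq_true', decide_eq_false_iff_not]
              intro hcon
              have : Reach l' e.2 f.1 := by simpa using hf1.2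
              exact h12.1 (hcon.trans' this.symm')
            have c1 : S₁.card ≤ lA.length + 1 :=
              ih lA (le_trans (List.length_filter_le _ _) hl') S₁ hA
            have c2 : S₂.card ≤ lB.length + 1 :=
              ih lB (le_trans (List.length_filter_le _ _) hl') S₂ hB
            have hsplit : S₁.card + S₂.card = S.card := by
              simpa [hS₁def, hS₂def] using Finset.card_filter_add_card_filter_not (s := S)
                (p := fun x => Reach l' e.1 x)
            have : S.card ≤ l'.length + 2 := by omega
            simpa [Nat.succ_eq_add_one] using this
        · -- S is entirely in the class of x₀ for l'
          push_neg at hc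
          have hone : ∀ y ∈ S, Reach l' x₀ y := by
            intro y hy
            rcases reach_decomp (hS x₀ hx₀ y hy) with h1 | ⟨h1, _⟩
            · exact h1
            · rcases h1 with h1 | h1
              · exact absurd h1 hc.1
              · exact absurd h1 hc.2
          have : ∀ x ∈ S, ∀ y ∈ S, Reach l' x y := fun x hx y hy =>
            (hone x hx).symm'.trans' (hone y hy)
          calc S.card ≤ l'.length + 1 := ih l' hl' S this
            _ ≤ (e :: l').length + 1 := by simp


/-- `Fac k n l`: `l` is a monotone minimal transposition factorization of the
cycle `(k, k+1, ..., k+n-1)`. -/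
def Fac (k n : ℕ) (l : List (ℕ × ℕ)) : Prop :=
  l.length + 1 = n ∧ (∀ p ∈ l, k ≤ p.1 ∧ p.1 < p.2 ∧ p.2 < k + n) ∧
  l.Pairwise (fun p q => p.2 ≤ q.2) ∧
  ∀ x, x < n → P l (k + x) = k + (x + 1) % n

def up (k : ℕ) (m : List (ℕ × ℕ)) : List (ℕ × ℕ) := m.map fun p => (p.1 + k, p.2 + k)

def down (k : ℕ) (l : List (ℕ × ℕ)) : List (ℕ × ℕ) := l.map fun p => (p.1 - k, p.2 - k)

@[simp] lemma up_length (k : ℕ) (m : List (ℕ × ℕ)) : (up k m).length = m.length := by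
  simp [up]

@[simp] lemma down_length (k : ℕ) (m : List (ℕ × ℕ)) : (down k m).length = m.length := by
  simp [down]

lemma down_up (k : ℕ) (m : List (ℕ × ℕ)) : down k (up k m) = m := by
  simp only [down, up, List.map_map, Function.comp_def, Nat.add_sub_cancel]
  simp

lemma up_down {k : ℕ} {l : List (ℕ × ℕ)} (h : ∀ p ∈ l, k ≤ p.1 ∧ k ≤ p.2) :
    up k (down k l) = l := by
  induction l with
  | nil => rfl
  | cons e l ih =>
      have he := h e List.mem_cons_self
      have : up k (down k l) = l := ih fun p hp => h p (List.mem_cons_of_mem _ hp)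
      simp only [up, down, List.map_map, List.map_cons] at this ⊢
      rw [this]
      congr 1
      · ext <;> simp <;> omega

lemma swap_add (s t y k : ℕ) :
    Equiv.swap (s + k) (t + k) (y + k) = Equiv.swap s t y + k := by
  rcases eq_or_ne y s with rfl | hs
  · rw [Equiv.swap_apply_left, Equiv.swap_apply_left]
  rcases eq_or_ne y t with rfl | ht
  · rw [Equiv.swap_apply_right, Equiv.swap_apply_right]
  · rw [Equiv.swap_apply_of_ne_of_ne (by omega) (by omega),
      Equiv.swap_apply_of_ne_of_ne hs ht]

lemma P_up (k : ℕ) (m : List (ℕ × ℕ)) (x : ℕ) : P (up k m) (x + k) = P m x + k := by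
  induction m with
  | nil => simp [up, P]
  | cons e l ih =>
      simp only [up, List.map_cons] at ih ⊢
      rw [P_cons, P_cons]
      simp only [Equiv.Perm.mul_apply, ih]
      exact swap_add e.1 e.2 (P l x) k

lemma up_mem {k : ℕ} {m : List (ℕ × ℕ)} {p : ℕ × ℕ} (hp : p ∈ up k m) :
    ∃ q ∈ m, p = (q.1 + k, q.2 + k) := by
  simp only [up, List.mem_map] at hp
  rcases hp with ⟨q, hq, rfl⟩
  exact ⟨q, hq, rfl⟩

lemma fac_up {k n : ℕ} {m : List (ℕ × ℕ)} (h : Fac 0 n m) : Fac k n (up k m) := by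
  obtain ⟨hlen, hb, hp, hP⟩ := h
  refine ⟨by simpa using hlen, ?_, ?_, ?_⟩
  · intro p hp'
    obtain ⟨q, hq, rfl⟩ := up_mem hp'
    have := hb q hq
    simp only []
    omega
  · simpa [up, List.pairwise_map] using hp.imp (by intro a b hab; omega)
  · intro x hx
    have h1 : P (up k m) (x + k) = P m x + k := P_up k m x
    have h2 : P m x = (x + 1) % n := by simpa using hP x hx
    rw [show k + x = x + k by omega, h1, h2]
    omega

lemma fac_down {k n : ℕ} {l : List (ℕ × ℕ)} (h : Fac k n l) : Fac 0 n (down k l) := by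
  obtain ⟨hlen, hb, hp, hP⟩ := h
  have hud : up k (down k l) = l := up_down fun p hp' => by
    have := hb p hp'; omega
  refine ⟨by simpa using hlen, ?_, ?_, ?_⟩
  · intro p hp'
    simp only [down, List.mem_map] at hp'
    rcases hp' with ⟨q, hq, rfl⟩
    have := hb q hq
    simp only []
    omega
  · simp only [down, List.pairwise_map]
    exact hp.imp (by intro a b hab; omega)
  · intro x hx
    have h1 : P (up k (down k l)) (x + k) = P (down k l) x + k := P_up k (down k l) x
    rw [hud] at h1
    have h2 : P l (k + x) = k + (x + 1) % n := hP x hx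
    rw [show x + k = k + x by omega, h2] at h1
    have : P (down k l) x = (x + 1) % n := by omega
    simpa using this

/-- Shifting gives a bijection between factorizations based at `k` and at `0`. -/
def shiftEquiv (k n : ℕ) : {l : List (ℕ × ℕ) // Fac k n l} ≃ {m : List (ℕ × ℕ) // Fac 0 n m} where
  toFun l := ⟨down k l.1, fac_down l.2⟩
  invFun m := ⟨up k m.1, fac_up m.2⟩
  left_inv l := Subtype.ext (up_down fun p hp => by have := l.2.2.1 p hp; omega)
  right_inv m := Subtype.ext (down_up k m.1)

lemma reach_chain_interval {l : List (ℕ × ℕ)} {lo hi : ℕ}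
    (h : ∀ x, lo ≤ x → x < hi → Reach l x (x + 1)) :
    ∀ x y, lo ≤ x → x ≤ hi → lo ≤ y → y ≤ hi → Reach l x y := by
  have hup : ∀ k x, lo ≤ x → x + k ≤ hi → Reach l x (x + k) := by
    intro k
    induction k with
    | zero => intro x _ _; exact reach_refl _ _
    | succ k ih =>
        intro x hx hxk
        have h1 := ih x hx (by omega)
        have h2 := h (x + k) (by omega) (by omega)
        exact h1.trans' h2
  intro x y hx hxh hy hyh
  rcases le_total x y with hxy | hxy
  · have := hup (y - x) x hx (by omega)
    simpa [Nat.add_sub_cancel' hxy] using this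
  · have := hup (x - y) y hy (by omega)
    exact (by simpa [Nat.add_sub_cancel' hxy] using this : Reach l y x).symm'

def glue (n a : ℕ) (l₁ m : List (ℕ × ℕ)) : List (ℕ × ℕ) :=
  l₁ ++ up (a + 1) m ++ [(a, n + 1)]

lemma fac_glue {n a : ℕ} {l₁ m : List (ℕ × ℕ)} (ha : a ≤ n)
    (h₁ : Fac 0 (a + 1) l₁) (h₂ : Fac 0 (n + 1 - a) m) :
    Fac 0 (n + 2) (glue n a l₁ m) := by
  obtain ⟨hlen₁, hb₁, hpw₁, hP₁⟩ := h₁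
  have h₂' : Fac (a + 1) (n + 1 - a) (up (a + 1) m) := fac_up h₂
  obtain ⟨hlenμ, hbμ, hpwμ, hPμ⟩ := h₂'
  rw [up_length] at hlenμ
  have hμval : ∀ y, y < n + 1 - a →
      P (up (a + 1) m) (a + 1 + y) = a + 1 + (y + 1) % (n + 1 - a) := hPμ
  have hfix₁ : ∀ y, a < y → P l₁ y = y := by
    intro y hy
    refine P_fix fun p hp => ?_
    have := hb₁ p hp; omega
  have hfixμ : ∀ y, y ≤ a → P (up (a + 1) m) y = y := by
    intro y hy
    refine P_fix fun p hp => ?_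
    have := hbμ p hp; omega
  have h₁val : ∀ x, x < a + 1 → P l₁ x = (x + 1) % (a + 1) := by
    intro x hx
    simpa using hP₁ x hx
  refine ⟨?_, ?_, ?_, ?_⟩
  · simp only [glue, List.length_append, up_length, List.length_singleton]
    omega
  · intro p hp
    simp only [glue, List.mem_append, List.mem_singleton] at hp
    rcases hp with (hp | hp) | rfl
    · have := hb₁ p hp; omega
    · have := hbμ p hp; omega
    · simp only []; omega
  · simp only [glue]
    rw [List.pairwise_append]
    refine ⟨?_, ?_, ?_⟩
    · rw [List.pairwise_append]
      refine ⟨hpw₁, hpwμ, ?_⟩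
      intro p hp q hq
      have h1 := hb₁ p hp
      have h2 := hbμ q hq
      omega
    · simp
    · intro p hp q hq
      simp only [List.mem_singleton] at hq
      subst hq
      simp only [List.mem_append] at hp
      rcases hp with hp | hp
      · have := hb₁ p hp; omega
      · have := hbμ p hp; omega
  · intro x hx
    simp only [glue, Nat.zero_add]
    rw [List.append_assoc, P_append, P_append]
    have hsingle : P [(a, n + 1)] = Equiv.swap a (n + 1) := by
      simp [P]
    rw [hsingle]
    simp only [Equiv.Perm.mul_apply]
    rcases eq_or_ne x a with hxa | hxa
    · rw [hxa, Equiv.swap_apply_left]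
      have e1 : P (up (a + 1) m) (n + 1) = a + 1 := by
        have := hμval (n - a) (by omega)
        rw [show a + 1 + (n - a) = n + 1 by omega] at this
        rw [this, show n - a + 1 = n + 1 - a by omega, Nat.mod_self]
      rw [e1, hfix₁ (a + 1) (by omega)]
      rw [Nat.mod_eq_of_lt (by omega)]
    rcases eq_or_ne x (n + 1) with hxn | hxn
    · rw [hxn, Equiv.swap_apply_right]
      rw [hfixμ a le_rfl, h₁val a (by omega), Nat.mod_self]
      simp
    · rw [Equiv.swap_apply_of_ne_of_ne hxa hxn]
      rcases lt_or_ge x a with hlt | hge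
      · rw [hfixμ x (by omega), h₁val x (by omega),
          Nat.mod_eq_of_lt (by omega), Nat.mod_eq_of_lt (by omega)]
      · -- a < x < n + 1
        have hax : a < x := by omega
        have hxn' : x < n + 1 := by omega
        have e1 : P (up (a + 1) m) x = x + 1 := by
          have := hμval (x - a - 1) (by omega)
          rw [show a + 1 + (x - a - 1) = x by omega] at this
          rw [this, Nat.mod_eq_of_lt (by omega)]
          omega
        rw [e1, hfix₁ (x + 1) (by omega), Nat.mod_eq_of_lt (by omega)]

def SigT (n : ℕ) : Type :=
  (a : Fin (n + 1)) × ({l : List (ℕ × ℕ) // Fac 0 (a.1 + 1) l} ×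
    {m : List (ℕ × ℕ) // Fac 0 (n + 1 - a.1) m})

def glueMap (n : ℕ) : SigT n → {l : List (ℕ × ℕ) // Fac 0 (n + 2) l} :=
  fun x => ⟨glue n x.1.1 x.2.1.1 x.2.2.1,
    fac_glue (by omega) x.2.1.2 x.2.2.2⟩

lemma glue_inj (n : ℕ) : Function.Injective (glueMap n) := by
  rintro ⟨a, ⟨l₁, h₁⟩, ⟨m, h₂⟩⟩ ⟨a', ⟨l₁', h₁'⟩, ⟨m', h₂'⟩⟩ h
  have hlist : glue n a.1 l₁ m = glue n a'.1 l₁' m' := congrArg Subtype.val h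
  simp only [glue] at hlist
  have h1 := List.append_inj' hlist (by simp)
  have he : (a.1, n + 1) = (a'.1, n + 1) := by
    have := h1.2; simpa using this
  have haa : a = a' := Fin.ext (by simpa using congrArg Prod.fst he)
  subst haa
  have hlen : l₁.length = l₁'.length := by
    have e1 := h₁.1; have e2 := h₁'.1; omega
  have h2' := List.append_inj h1.1 hlen
  have hmm : m = m' := by
    have := h2'.2
    have : down (a.1 + 1) (up (a.1 + 1) m) = down (a.1 + 1) (up (a.1 + 1) m') := by rw [this]
    simpa [down_up] using this
  have hll : l₁ = l₁' := h2'.1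
  subst hmm; subst hll
  rfl

lemma dropWhile_head_false {α : Type*} {p : α → Bool} {l : List α} {q : α} {r : List α}
    (h : l.dropWhile p = q :: r) : p q = false := by
  induction l with
  | nil => simp at h
  | cons x xs ih =>
      rw [List.dropWhile_cons] at h
      by_cases hx : p x
      · simp only [hx, if_true] at h
        exact ih h
      · simp only [hx, if_false] at h
        cases h
        simpa using hx


lemma glue_surj (n : ℕ) : Function.Surjective (glueMap n) := by
  rintro ⟨l, hF⟩
  obtain ⟨hlen, hb, hpw, hP⟩ := id hF
  have hP' : ∀ x, x < n + 2 → P l x = (x + 1) % (n + 2) := by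
    intro x hx; simpa using hP x hx
  rcases l.eq_nil_or_concat' with rfl | ⟨l', e, rfl⟩
  · simp at hlen
  -- basic facts
  have hmeml : ∀ p ∈ l', p ∈ l' ++ [e] := fun p hp => List.mem_append_left _ hp
  have hmeme : e ∈ l' ++ [e] := List.mem_append_right _ (List.mem_singleton_self e)
  have hlen' : l'.length = n := by
    simp only [List.length_append, List.length_singleton] at hlen; omega
  have hpw' : l'.Pairwise (fun p q => p.2 ≤ q.2) := (List.pairwise_append.mp hpw).1
  -- the last label is n+1
  have he2 : e.2 = n + 1 := by
    by_contra hne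
    have he2' : e.2 < n + 2 := by have := (hb e hmeme).2.2; omega
    have hub : ∀ p ∈ l' ++ [e], p.1 ≠ n + 1 ∧ p.2 ≠ n + 1 := by
      intro p hp
      rcases (List.mem_append.mp hp) with hp' | hp'
      · have h1 := (List.pairwise_append.mp hpw).2.2 p hp' e (List.mem_singleton_self e)
        have h2 := hb p hp
        omega
      · have : p = e := List.mem_singleton.mp hp'
        subst this
        have h2 := hb p hp
        omega
    have := P_fix hub
    have h0 := hP' (n + 1) (by omega)
    rw [this] at h0
    rw [Nat.mod_self] at h0
    omega
  set a := e.1 with hadef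
  have ha : a ≤ n := by
    have := (hb e hmeme).2.1
    omega
  have he : e = (a, n + 1) := by
    rw [hadef, ← he2]
  -- P l' in terms of P l
  have hswap : ∀ x, P l' x = P (l' ++ [e]) (Equiv.swap a (n + 1) x) := by
    intro x
    rw [P_append, he]
    have hsingle : P [(a, n + 1)] = Equiv.swap a (n + 1) := by simp [P]
    rw [hsingle]
    simp only [Equiv.Perm.mul_apply, Equiv.swap_apply_self]
  have hV1 : ∀ x, x < a → P l' x = x + 1 := by
    intro x hx
    rw [hswap, Equiv.swap_apply_of_ne_of_ne (by omega) (by omega),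
      hP' x (by omega), Nat.mod_eq_of_lt (by omega)]
  have hV2 : P l' a = 0 := by
    rw [hswap, Equiv.swap_apply_left, hP' (n + 1) (by omega), Nat.mod_self]
  have hV3 : ∀ x, a < x → x ≤ n → P l' x = x + 1 := by
    intro x hx1 hx2
    rw [hswap, Equiv.swap_apply_of_ne_of_ne (by omega) (by omega),
      hP' x (by omega), Nat.mod_eq_of_lt (by omega)]
  have hV4 : P l' (n + 1) = a + 1 := by
    rw [hswap, Equiv.swap_apply_right, hP' a (by omega), Nat.mod_eq_of_lt (by omega)]
  -- no crossing edges in l'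
  have hNC : ∀ p ∈ l', p.2 ≤ a ∨ a + 1 ≤ p.1 := by
    intro p hp
    by_contra hcon
    push_neg at hcon
    obtain ⟨hc1, hc2⟩ := hcon
    have hp1 : p.1 ≤ a := by omega
    have hp2 : a + 1 ≤ p.2 := by omega
    have hpb := hb p (hmeml p hp)
    have hp2' : p.2 ≤ n + 1 := by omega
    have hRA : ∀ x y, x ≤ a → y ≤ a → Reach l' x y := by
      refine fun x y hx hy =>
        reach_chain_interval (lo := 0) (hi := a) ?_ x y (by omega) hx (by omega) hy
      intro z hz1 hz2
      have := reach_P l' z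
      rwa [hV1 z hz2] at this
    have hRB : ∀ x y, a + 1 ≤ x → x ≤ n + 1 → a + 1 ≤ y → y ≤ n + 1 → Reach l' x y := by
      refine fun x y hx hx2 hy hy2 =>
        reach_chain_interval (lo := a + 1) (hi := n + 1) ?_ x y hx hx2 hy hy2
      intro z hz1 hz2
      have := reach_P l' z
      rwa [hV3 z (by omega) (by omega)] at this
    have hst : Reach l' p.1 p.2 := Relation.ReflTransGen.single (step_of_mem hp)
    have hcon' : ∀ x, x < n + 2 → Reach l' x p.1 := by
      intro x hx
      rcases le_or_gt x a with hxa | hxa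
      · exact hRA x p.1 hxa hp1
      · exact (hRB x p.2 (by omega) (by omega) hp2 hp2').trans' hst.symm'
    have hall : ∀ x ∈ Finset.range (n + 2), ∀ y ∈ Finset.range (n + 2), Reach l' x y := by
      intro x hx y hy
      rw [Finset.mem_range] at hx hy
      exact (hcon' x hx).trans' (hcon' y hy).symm'
    have := reach_card l' (Finset.range (n + 2)) hall
    rw [Finset.card_range, hlen'] at this
    omega
  -- split l' into the part with labels ≤ a and the rest
  set l₁ := l'.takeWhile (fun p => decide (p.2 ≤ a)) with hl₁def
  set l₂ := l'.dropWhile (fun p => decide (p.2 ≤ a)) with hl₂def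
  have htd : l₁ ++ l₂ = l' := List.takeWhile_append_dropWhile
  have h1mem : ∀ p ∈ l₁, p.2 ≤ a := by
    intro p hp
    have := List.mem_takeWhile_imp hp
    simpa using this
  have hsub1 : ∀ p ∈ l₁, p ∈ l' := fun p hp => (List.takeWhile_sublist _).mem hp
  have hsub2 : ∀ p ∈ l₂, p ∈ l' := fun p hp => (List.dropWhile_sublist _).mem hp
  have h2mem : ∀ p ∈ l₂, a + 1 ≤ p.1 ∧ a + 1 ≤ p.2 := by
    intro p hp
    cases hl₂ : l₂ with
    | nil => rw [hl₂] at hp; simp at hp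
    | cons q r =>
        have hl₂' : l'.dropWhile (fun p => decide (p.2 ≤ a)) = q :: r := by
          rw [← hl₂def]; exact hl₂
        have hqfalse : decide (q.2 ≤ a) = false :=
          dropWhile_head_false (p := fun p : ℕ × ℕ => decide (p.2 ≤ a)) hl₂'
        have hq2 : a + 1 ≤ q.2 := by simpa using hqfalse
        have hpw₂ : l₂.Pairwise (fun p q => p.2 ≤ q.2) :=
          hpw'.sublist (List.dropWhile_sublist _)
        have hpl' : p ∈ l' := hsub2 p hp
        have hp2 : a + 1 ≤ p.2 := by
          rw [hl₂] at hp
          rcases List.mem_cons.mp hp with rfl | hp'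
          · exact hq2
          · rw [hl₂] at hpw₂
            have := (List.pairwise_cons.mp hpw₂).1 p hp'
            omega
        have hp1 : a + 1 ≤ p.1 := by
          rcases hNC p hpl' with h | h
          · omega
          · exact h
        exact ⟨hp1, hp2⟩
  -- products of the two halves
  have hPsplit : ∀ x, P l' x = P l₁ (P l₂ x) := by
    intro x
    rw [← htd, P_append]
    rfl
  have hβfix : ∀ x, x ≤ a → P l₂ x = x := by
    intro x hx
    refine P_fix fun p hp => ?_
    have := h2mem p hp; omega
  have hαfix : ∀ x, a < x → P l₁ x = x := by
    intro x hx
    refine P_fix fun p hp => ?_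
    have h1 := h1mem p hp
    have h2 := (hb p (hmeml p (hsub1 p hp))).2.1
    omega
  have hβge : ∀ x, a + 1 ≤ x → a + 1 ≤ P l₂ x := fun x hx => P_ge h2mem hx
  have hA1 : ∀ x, x < a → P l₁ x = x + 1 := by
    intro x hx
    have := hV1 x hx
    rw [hPsplit, hβfix x (by omega)] at this
    exact this
  have hA2 : P l₁ a = 0 := by
    have := hV2
    rw [hPsplit, hβfix a le_rfl] at this
    exact this
  have hB3 : ∀ x, a < x → x ≤ n → P l₂ x = x + 1 := by
    intro x hx1 hx2
    have := hV3 x hx1 hx2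
    rw [hPsplit, hαfix _ (by have := hβge x (by omega); omega)] at this
    exact this
  have hB4 : P l₂ (n + 1) = a + 1 := by
    have := hV4
    rw [hPsplit, hαfix _ (by have := hβge (n + 1) (by omega); omega)] at this
    exact this
  -- lengths are forced
  have hlen₁ : a ≤ l₁.length := by
    have hconn : ∀ x y, x ≤ a → y ≤ a → Reach l₁ x y := by
      refine fun x y hx hy =>
        reach_chain_interval (lo := 0) (hi := a) ?_ x y (by omega) hx (by omega) hy
      intro z hz1 hz2
      have := reach_P l₁ z
      rwa [hA1 z hz2] at this
    have hall : ∀ x ∈ Finset.range (a + 1), ∀ y ∈ Finset.range (a + 1), Reach l₁ x y := by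
      intro x hx y hy
      rw [Finset.mem_range] at hx hy
      exact hconn x y (by omega) (by omega)
    have := reach_card l₁ (Finset.range (a + 1)) hall
    rw [Finset.card_range] at this
    omega
  have hlen₂ : n - a ≤ l₂.length := by
    have hconn : ∀ x y, a + 1 ≤ x → x ≤ n + 1 → a + 1 ≤ y → y ≤ n + 1 → Reach l₂ x y := by
      refine fun x y hx hx2 hy hy2 =>
        reach_chain_interval (lo := a + 1) (hi := n + 1) ?_ x y hx hx2 hy hy2
      intro z hz1 hz2
      have := reach_P l₂ z
      rwa [hB3 z (by omega) (by omega)] at this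
    have hall : ∀ x ∈ Finset.Icc (a + 1) (n + 1), ∀ y ∈ Finset.Icc (a + 1) (n + 1),
        Reach l₂ x y := by
      intro x hx y hy
      rw [Finset.mem_Icc] at hx hy
      exact hconn x y hx.1 hx.2 hy.1 hy.2
    have := reach_card l₂ (Finset.Icc (a + 1) (n + 1)) hall
    rw [Nat.card_Icc] at this
    omega
  have htot : l₁.length + l₂.length = n := by
    have := congrArg List.length htd
    simp only [List.length_append] at this
    omega
  have hl₁len : l₁.length = a := by omega
  have hl₂len : l₂.length = n - a := by omega
  -- the two halves are factorizations
  have hfac₁ : Fac 0 (a + 1) l₁ := by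
    refine ⟨by omega, ?_, hpw'.sublist (List.takeWhile_sublist _), ?_⟩
    · intro p hp
      have h1 := h1mem p hp
      have h2 := (hb p (hmeml p (hsub1 p hp))).2.1
      omega
    · intro x hx
      simp only [Nat.zero_add]
      rcases eq_or_ne x a with rfl | hxa
      · rw [hA2, Nat.mod_self]
      · rw [hA1 x (by omega), Nat.mod_eq_of_lt (by omega)]
  have hfac₂ : Fac (a + 1) (n + 1 - a) l₂ := by
    refine ⟨by omega, ?_, hpw'.sublist (List.dropWhile_sublist _), ?_⟩
    · intro p hp
      have h1 := h2mem p hp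
      have h2 := hb p (hmeml p (hsub2 p hp))
      omega
    · intro y hy
      rcases eq_or_ne y (n - a) with rfl | hya
      · rw [show a + 1 + (n - a) = n + 1 by omega, hB4,
          show n - a + 1 = n + 1 - a by omega, Nat.mod_self]
      · rw [show a + 1 + y = a + 1 + y by rfl]
        have hxa : a < a + 1 + y := by omega
        have hxn : a + 1 + y ≤ n := by omega
        rw [hB3 (a + 1 + y) hxa hxn, Nat.mod_eq_of_lt (by omega)]
        omega
  -- assemble the preimage
  refine ⟨⟨⟨a, by omega⟩, ⟨l₁, hfac₁⟩, ⟨down (a + 1) l₂, fac_down hfac₂⟩⟩, ?_⟩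
  apply Subtype.ext
  show glue n a l₁ (down (a + 1) l₂) = l' ++ [e]
  rw [glue, up_down (fun p hp => h2mem p hp), htd, he]


lemma fac_zero_one : Fac 0 1 ([] : List (ℕ × ℕ)) := by
  refine ⟨rfl, by simp, by simp, ?_⟩
  intro x hx
  interval_cases x
  simp

lemma fac_one_eq_nil {l : List (ℕ × ℕ)} (h : Fac 0 1 l) : l = [] := by
  have := h.1
  exact List.length_eq_zero_iff.mp (by omega)

lemma nat_card_sigma {ι : Type*} [Fintype ι] (f : ι → Type*) [∀ i, Finite (f i)] :
    Nat.card ((i : ι) × f i) = ∑ i, Nat.card (f i) := by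
  letI : ∀ i, Fintype (f i) := fun i => Fintype.ofFinite _
  simp [Nat.card_eq_fintype_card, Fintype.card_sigma]

lemma card_fac : ∀ n : ℕ, Nat.card {l : List (ℕ × ℕ) // Fac 0 (n + 1) l} = catalan n ∧
    Finite {l : List (ℕ × ℕ) // Fac 0 (n + 1) l} := by
  intro n
  induction n using Nat.strong_induction_on with
  | _ n ih =>
    match n with
    | 0 =>
        haveI : Subsingleton {l : List (ℕ × ℕ) // Fac 0 1 l} :=
          ⟨fun a b => Subtype.ext ((fac_one_eq_nil a.2).trans (fac_one_eq_nil b.2).symm)⟩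
        haveI : Nonempty {l : List (ℕ × ℕ) // Fac 0 1 l} := ⟨⟨[], fac_zero_one⟩⟩
        exact ⟨by simpa [catalan_zero] using Nat.card_unique, Finite.of_subsingleton⟩
    | (k + 1) =>
        have E : SigT k ≃ {l : List (ℕ × ℕ) // Fac 0 (k + 2) l} :=
          Equiv.ofBijective _ ⟨glue_inj k, glue_surj k⟩
        have hfin1 : ∀ a : Fin (k + 1), Finite {l : List (ℕ × ℕ) // Fac 0 (a.1 + 1) l} :=
          fun a => (ih a.1 (by omega)).2
        have hfin2 : ∀ a : Fin (k + 1), Finite {m : List (ℕ × ℕ) // Fac 0 (k + 1 - a.1) m} := by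
          intro a
          have hh : k + 1 - a.1 = (k - a.1) + 1 := by omega
          rw [hh]
          exact (ih (k - a.1) (by omega)).2
        have hcard1 : ∀ a : Fin (k + 1),
            Nat.card {l : List (ℕ × ℕ) // Fac 0 (a.1 + 1) l} = catalan a.1 :=
          fun a => (ih a.1 (by omega)).1
        have hcard2 : ∀ a : Fin (k + 1),
            Nat.card {m : List (ℕ × ℕ) // Fac 0 (k + 1 - a.1) m} = catalan (k - a.1) := by
          intro a
          have hh : k + 1 - a.1 = (k - a.1) + 1 := by omega
          rw [hh]
          exact (ih (k - a.1) (by omega)).1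
        haveI hfinp : ∀ a : Fin (k + 1), Finite ({l : List (ℕ × ℕ) // Fac 0 (a.1 + 1) l} ×
            {m : List (ℕ × ℕ) // Fac 0 (k + 1 - a.1) m}) := by
          intro a
          haveI := hfin1 a
          haveI := hfin2 a
          infer_instance
        haveI hfinS : Finite (SigT k) := by
          unfold SigT
          infer_instance
        have hfinF : Finite {l : List (ℕ × ℕ) // Fac 0 (k + 2) l} := Finite.of_equiv _ E
        constructor
        · have h1 : Nat.card {l : List (ℕ × ℕ) // Fac 0 (k + 2) l} = Nat.card (SigT k) :=
            Nat.card_congr E.symm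
          rw [h1]
          unfold SigT
          rw [nat_card_sigma, catalan_succ]
          refine Finset.sum_congr rfl fun a _ => ?_
          rw [Nat.card_prod, hcard1 a, hcard2 a]
        · exact hfinF



lemma swap_val {d : ℕ} (i j y : Fin d) :
    ((Equiv.swap i j y : Fin d) : ℕ) = Equiv.swap (i : ℕ) (j : ℕ) (y : ℕ) := by
  rcases eq_or_ne y i with rfl | hi
  · rw [Equiv.swap_apply_left, Equiv.swap_apply_left]
  rcases eq_or_ne y j with rfl | hj
  · rw [Equiv.swap_apply_right, Equiv.swap_apply_right]
  · rw [Equiv.swap_apply_of_ne_of_ne hi hj,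
      Equiv.swap_apply_of_ne_of_ne (fun h => hi (Fin.val_injective h))
        (fun h => hj (Fin.val_injective h))]

lemma rel_prod {d : ℕ} (lf : List (Fin d × Fin d)) (y : Fin d) :
    (((lf.map fun q => Equiv.swap q.1 q.2).prod y : Fin d) : ℕ)
      = P (lf.map fun q => ((q.1 : ℕ), (q.2 : ℕ))) (y : ℕ) := by
  induction lf with
  | nil => simp [P]
  | cons q lf ih =>
      simp only [List.map_cons, List.prod_cons, P_cons, Equiv.Perm.mul_apply]
      rw [swap_val, ih]

lemma ofFn_get_cast {α : Type*} {m : ℕ} (l : List α) (h : m = l.length) :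
    List.ofFn (fun i : Fin m => l.get (Fin.cast h i)) = l := by
  subst h
  simpa using List.ofFn_get l

lemma finRotate_val {e : ℕ} (y : Fin (e + 1)) :
    ((finRotate (e + 1) y : Fin (e + 1)) : ℕ) = ((y : ℕ) + 1) % (e + 1) := by
  rw [finRotate_succ_apply, Fin.add_def]
  conv_rhs => rw [Nat.add_mod, Nat.mod_eq_of_lt y.isLt]
  rfl

lemma card_eq (d : ℕ) (hd : 1 ≤ d) :
    Nat.card {p : (Fin (d - 1) → Fin d) × (Fin (d - 1) → Fin d) //
        (∀ i, p.1 i < p.2 i) ∧ Monotone p.2 ∧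
        (List.ofFn (fun i => Equiv.swap (p.1 i) (p.2 i))).prod = finRotate d}
      = Nat.card {l : List (ℕ × ℕ) // Fac 0 d l} := by
  obtain ⟨e, rfl⟩ : ∃ e, d = e + 1 := ⟨d - 1, by omega⟩
  refine Nat.card_congr (Equiv.ofBijective
    (fun p => ⟨List.ofFn (fun i : Fin e => ((p.1.1 i : ℕ), (p.1.2 i : ℕ))), ?_⟩)
    ⟨?_, ?_⟩)
  · -- well-defined : the list is a factorization
    obtain ⟨⟨s, t⟩, hlt, hmono, hprod⟩ := p
    refine ⟨by simp, ?_, ?_, ?_⟩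
    · intro q hq
      rw [List.mem_ofFn] at hq
      obtain ⟨i, rfl⟩ := hq
      have h1 := hlt i
      have h2 := (t i).isLt
      refine ⟨by omega, ?_, by simpa using h2⟩
      exact h1
    · rw [List.pairwise_ofFn]
      intro i j hij
      exact hmono (le_of_lt hij)
    · intro x hx
      have key : (List.ofFn (fun i : Fin e => (((s i : ℕ)), ((t i : ℕ)))))
          = (List.ofFn (fun i : Fin e => (s i, t i))).map
              (fun q : Fin (e+1) × Fin (e+1) => ((q.1 : ℕ), (q.2 : ℕ))) := by
        rw [List.map_ofFn]
        rfl
      have hswaps : (List.ofFn (fun i : Fin e => (s i, t i))).map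
          (fun q : Fin (e+1) × Fin (e+1) => Equiv.swap q.1 q.2)
            = List.ofFn (fun i => Equiv.swap (s i) (t i)) := by
        rw [List.map_ofFn]
        rfl
      set y : Fin (e + 1) := ⟨x, hx⟩ with hy
      have := rel_prod (List.ofFn (fun i : Fin e => (s i, t i))) y
      rw [hswaps, hprod, ← key] at this
      have hyv : (y : ℕ) = x := rfl
      rw [hyv] at this
      rw [Nat.zero_add, ← this, finRotate_val, hyv]
      omega
  · -- injective
    rintro ⟨⟨s, t⟩, hp⟩ ⟨⟨s', t'⟩, hp'⟩ h
    have hl := congrArg Subtype.val h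
    simp only [List.ofFn_inj] at hl
    apply Subtype.ext
    have h1 : s = s' := by
      funext i
      have := congrArg (fun f => (f i).1) hl
      exact Fin.val_injective this
    have h2 : t = t' := by
      funext i
      have := congrArg (fun f => (f i).2) hl
      exact Fin.val_injective this
    simp [h1, h2]
  · -- surjective
    rintro ⟨l, hFac⟩
    obtain ⟨hlen, hb, hpw, hP⟩ := id hFac
    have hL : e = l.length := by omega
    have hmem : ∀ i : Fin e, l.get (Fin.cast hL i) ∈ l := fun i =>
      l.get_mem (Fin.cast hL i)
    have hbound : ∀ i : Fin e, (l.get (Fin.cast hL i)).1 < e + 1 ∧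
        (l.get (Fin.cast hL i)).2 < e + 1 := by
      intro i
      have := hb _ (hmem i)
      omega
    set s : Fin e → Fin (e + 1) := fun i => ⟨(l.get (Fin.cast hL i)).1, (hbound i).1⟩
    set t : Fin e → Fin (e + 1) := fun i => ⟨(l.get (Fin.cast hL i)).2, (hbound i).2⟩
    have key : List.ofFn (fun i : Fin e => ((s i : ℕ), (t i : ℕ))) = l := by
      have : (fun i : Fin e => ((s i : ℕ), (t i : ℕ)))
          = fun i : Fin e => l.get (Fin.cast hL i) := by
        funext i
        rfl
      rw [this, ofFn_get_cast]
    refine ⟨⟨⟨s, t⟩, ?_, ?_, ?_⟩, ?_⟩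
    · intro i
      have := (hb _ (hmem i)).2.1
      exact this
    · intro i j hij
      rcases lt_or_eq_of_le hij with hlt | heq
      · have hlt' : Fin.cast hL i < Fin.cast hL j := hlt
        have := List.pairwise_iff_get.mp hpw (Fin.cast hL i) (Fin.cast hL j) hlt'
        exact this
      · rw [heq]
    · show (List.ofFn fun i => Equiv.swap (s i) (t i)).prod = finRotate (e + 1)
      apply Equiv.ext
      intro y
      apply Fin.val_injective
      have h1 := rel_prod (List.ofFn (fun i : Fin e => (s i, t i))) y
      have hswaps : (List.ofFn (fun i : Fin e => (s i, t i))).map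
          (fun q : Fin (e+1) × Fin (e+1) => Equiv.swap q.1 q.2)
            = List.ofFn (fun i => Equiv.swap (s i) (t i)) := by
        rw [List.map_ofFn]
        rfl
      have hmapped : (List.ofFn (fun i : Fin e => (s i, t i))).map
          (fun q : Fin (e+1) × Fin (e+1) => ((q.1 : ℕ), (q.2 : ℕ))) = l := by
        rw [List.map_ofFn]
        exact key
      rw [hswaps, hmapped] at h1
      rw [h1, finRotate_val]
      have := hP (y : ℕ) y.isLt
      simpa using this
    · apply Subtype.ext
      exact key

end MonoFac

/-- The number of monotone factorizations of the full cycle (1 2 ... d) into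
d-1 transpositions (weakly increasing larger elements) is the Catalan number
C_{d-1} = (1/d)·binom(2(d-1), d-1). A transposition sequence is encoded by the
pair of functions (s, t) with τᵢ = (sᵢ tᵢ), sᵢ < tᵢ. -/
theorem monotone_factorizations_full_cycle (d : ℕ) (hd : 1 ≤ d) :
    Nat.card {p : (Fin (d - 1) → Fin d) × (Fin (d - 1) → Fin d) //
        (∀ i, p.1 i < p.2 i) ∧ Monotone p.2 ∧
        (List.ofFn (fun i => Equiv.swap (p.1 i) (p.2 i))).prod = finRotate d}
      = catalan (d - 1) ∧
    catalan (d - 1) = (2 * (d - 1)).choose (d - 1) / d := by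
  constructor
  · rw [MonoFac.card_eq d hd]
    have h2 : (d - 1) + 1 = d := by omega
    have := (MonoFac.card_fac (d - 1)).1
    rw [h2] at this
    exact this
  · rw [catalan_eq_centralBinom_div, Nat.centralBinom]
    rw [show d - 1 + 1 = d by omega]
end

section
/- If there exists an r-step transitive walk in the transposition Cayley graph of S(d) from a permutation of cycle type α ⊢ d to a permutation of cycle type β ⊢ d, then r ≥ ℓ(α) + ℓ(β) - 2; equivalently, the genus g = (r + 2 - ℓ(α) - ℓ(β))/2 is a nonnegative (half-)integer, and combined with the parity constraint it is a nonnegative integer. -/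
/-- Number of cycles of a permutation of `Fin d`, counting fixed points as cycles. -/
def numCycles (d : ℕ) (σ : Equiv.Perm (Fin d)) : ℕ :=
  σ.cycleType.card + (d - σ.cycleType.sum)

open Equiv Equiv.Perm Finset

namespace TWG

variable {d : ℕ}

/-- Orbit relation of the subgroup generated by `S`. -/
def orel (S : Set (Perm (Fin d))) (x y : Fin d) : Prop :=
  ∃ g ∈ Subgroup.closure S, g x = y

lemma orel_refl (S : Set (Perm (Fin d))) (x : Fin d) : orel S x x :=
  ⟨1, Subgroup.one_mem _, rfl⟩

lemma orel_symm {S : Set (Perm (Fin d))} {x y : Fin d} (h : orel S x y) : orel S y x := by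
  obtain ⟨g, hg, rfl⟩ := h
  exact ⟨g⁻¹, Subgroup.inv_mem _ hg, by simp⟩

lemma orel_trans {S : Set (Perm (Fin d))} {x y z : Fin d} (h : orel S x y) (h' : orel S y z) :
    orel S x z := by
  obtain ⟨g, hg, rfl⟩ := h
  obtain ⟨g', hg', rfl⟩ := h'
  exact ⟨g' * g, Subgroup.mul_mem _ hg' hg, rfl⟩

lemma orel_mono {S T : Set (Perm (Fin d))} (h : S ⊆ T) {x y : Fin d} (hxy : orel S x y) :
    orel T x y := by
  obtain ⟨g, hg, rfl⟩ := hxy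
  exact ⟨g, Subgroup.closure_mono h hg, rfl⟩

lemma orel_congr {S T : Set (Perm (Fin d))}
    (h : Subgroup.closure S = Subgroup.closure T) : orel S = orel T := by
  unfold orel; rw [h]

/-- The orbit of `x` as a finset. -/
noncomputable def cls (S : Set (Perm (Fin d))) (x : Fin d) : Finset (Fin d) :=
  @Finset.filter _ (fun y => orel S x y) (Classical.decPred _) univ

lemma mem_cls {S : Set (Perm (Fin d))} {x y : Fin d} : y ∈ cls S x ↔ orel S x y := by
  simp [cls]

lemma cls_eq_of_orel {S : Set (Perm (Fin d))} {x y : Fin d} (h : orel S x y) :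
    cls S x = cls S y := by
  ext z
  simp only [mem_cls]
  exact ⟨fun h' => orel_trans (orel_symm h) h', fun h' => orel_trans h h'⟩

lemma orel_of_cls_eq {S : Set (Perm (Fin d))} {x y : Fin d} (h : cls S x = cls S y) :
    orel S x y := by
  have : y ∈ cls S x := h ▸ mem_cls.mpr (orel_refl S y)
  exact mem_cls.mp this

/-- Number of orbits. -/
noncomputable def N (S : Set (Perm (Fin d))) : ℕ := (univ.image (cls S)).card

lemma card_image_le_image {α β : Type*} [Fintype α] [DecidableEq β] (f g : α → β)
    (h : ∀ x y, f x = f y → g x = g y) :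
    (univ.image g).card ≤ (univ.image f).card := by
  classical
  apply Finset.card_le_card_of_surjOn
    (fun O => if h' : ∃ x, f x = O then g h'.choose else O)
  intro b hb
  simp only [coe_image, Set.mem_image, Set.mem_univ] at hb ⊢
  obtain ⟨x, -, rfl⟩ := hb
  refine ⟨f x, ⟨x, by simp, rfl⟩, ?_⟩
  have h' : ∃ y, f y = f x := ⟨x, rfl⟩
  rw [dif_pos h']
  exact h _ _ h'.choose_spec

lemma N_le_of {S T : Set (Perm (Fin d))} (h : ∀ x y, orel S x y → orel T x y) :
    N T ≤ N S :=
  card_image_le_image (cls S) (cls T) fun x y hxy => cls_eq_of_orel (h x y (orel_of_cls_eq hxy))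

lemma N_antitone {S T : Set (Perm (Fin d))} (h : S ⊆ T) : N T ≤ N S :=
  N_le_of fun _ _ => orel_mono h

lemma N_congr {S T : Set (Perm (Fin d))}
    (h : Subgroup.closure S = Subgroup.closure T) : N S = N T := by
  unfold N cls
  rw [orel_congr h]


/-- The block relation: `orel S` joined along the pair (a,b). -/
def R (S : Set (Perm (Fin d))) (a b x y : Fin d) : Prop :=
  orel S x y ∨ ((orel S x a ∨ orel S x b) ∧ (orel S y a ∨ orel S y b))

lemma R_refl (S : Set (Perm (Fin d))) (a b x : Fin d) : R S a b x x :=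
  Or.inl (orel_refl S x)

lemma R_symm {S : Set (Perm (Fin d))} {a b x y : Fin d} (h : R S a b x y) : R S a b y x := by
  rcases h with h | ⟨h1, h2⟩
  · exact Or.inl (orel_symm h)
  · exact Or.inr ⟨h2, h1⟩

lemma R_trans {S : Set (Perm (Fin d))} {a b x y z : Fin d} (h : R S a b x y)
    (h' : R S a b y z) : R S a b x z := by
  rcases h with h | ⟨h1, h2⟩ <;> rcases h' with h' | ⟨h3, h4⟩
  · exact Or.inl (orel_trans h h')
  · exact Or.inr ⟨h3.imp (orel_trans h) (orel_trans h), h4⟩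
  · exact Or.inr ⟨h1, h2.imp (fun hz => orel_trans (orel_symm h') hz)
      (fun hz => orel_trans (orel_symm h') hz)⟩
  · exact Or.inr ⟨h1, h4⟩

lemma R_apply {S : Set (Perm (Fin d))} {a b : Fin d} {g : Perm (Fin d)}
    (hg : g ∈ Subgroup.closure (insert (Equiv.swap a b) S)) (x : Fin d) :
    R S a b x (g x) := by
  induction hg using Subgroup.closure_induction generalizing x with
  | mem g hgS =>
    rcases hgS with rfl | hgS
    · by_cases hxa : x = a
      · subst hxa
        rw [Equiv.swap_apply_left]
        exact Or.inr ⟨Or.inl (orel_refl S x), Or.inr (orel_refl S b)⟩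
      · by_cases hxb : x = b
        · subst hxb
          rw [Equiv.swap_apply_right]
          exact Or.inr ⟨Or.inr (orel_refl S x), Or.inl (orel_refl S a)⟩
        · rw [Equiv.swap_apply_of_ne_of_ne hxa hxb]
          exact R_refl S a b x
    · exact Or.inl ⟨g, Subgroup.subset_closure hgS, rfl⟩
  | one => exact R_refl S a b x
  | mul g h hgm hhm hg hh =>
    have : (g * h) x = g (h x) := rfl
    rw [this]
    exact R_trans (hh x) (hg (h x))
  | inv g hgm hg =>
    have := hg (g⁻¹ x)
    rw [show g (g⁻¹ x) = x by simp] at this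
    exact R_symm this

lemma orel_insert_swap {S : Set (Perm (Fin d))} {a b x y : Fin d}
    (h : orel (insert (Equiv.swap a b) S) x y) : R S a b x y := by
  obtain ⟨g, hg, rfl⟩ := h
  exact R_apply hg x

/-- Adding a swap to the generators decreases the orbit count by at most 1. -/
lemma N_le_insert_swap (S : Set (Perm (Fin d))) (a b : Fin d) :
    N S ≤ N (insert (Equiv.swap a b) S) + 1 := by
  set T : Set (Perm (Fin d)) := insert (Equiv.swap a b) S with hT
  have hsub : univ.image (cls S) ⊆
      insert (cls S a) (insert (cls S b) ((univ.image (cls T)).erase (cls T a))) := by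
    intro O hO
    obtain ⟨x, -, rfl⟩ := Finset.mem_image.mp hO
    by_cases hxa : orel S x a
    · rw [cls_eq_of_orel hxa]; exact mem_insert_self _ _
    · by_cases hxb : orel S x b
      · rw [cls_eq_of_orel hxb]
        exact mem_insert_of_mem (mem_insert_self _ _)
      · have hclsx : cls T x = cls S x := by
          ext y
          simp only [mem_cls]
          constructor
          · intro hy
            rcases orel_insert_swap hy with hy | ⟨h1, h2⟩
            · exact hy
            · exact absurd h1 (by simp [hxa, hxb])
          · exact orel_mono (Set.subset_insert _ _)
        have hne : cls T x ≠ cls T a := by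
          intro he
          rcases orel_insert_swap (orel_of_cls_eq he) with hy | ⟨h1, h2⟩
          · exact hxa hy
          · exact absurd h1 (by simp [hxa, hxb])
        refine mem_insert_of_mem (mem_insert_of_mem ?_)
        rw [← hclsx]
        exact Finset.mem_erase.mpr ⟨hne, Finset.mem_image.mpr ⟨x, mem_univ x, rfl⟩⟩
  have hmem : cls T a ∈ univ.image (cls T) := Finset.mem_image.mpr ⟨a, mem_univ a, rfl⟩
  have h1 : 1 ≤ N T := Finset.card_pos.mpr ⟨cls T a, hmem⟩
  have e1 := Finset.card_le_card hsub
  have e2 := Finset.card_insert_le (cls S a)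
    (insert (cls S b) ((univ.image (cls T)).erase (cls T a)))
  have e3 := Finset.card_insert_le (cls S b) ((univ.image (cls T)).erase (cls T a))
  have e4 := Finset.card_erase_of_mem hmem
  unfold T at *
  unfold N at *
  omega

/-- If a,b are already in the same orbit, adding the swap does not change orbits. -/
lemma N_insert_swap_eq {S : Set (Perm (Fin d))} {a b : Fin d} (h : orel S a b) :
    N (insert (Equiv.swap a b) S) = N S := by
  have key : ∀ x y : Fin d, orel (insert (Equiv.swap a b) S) x y ↔ orel S x y := by
    intro x y
    constructor
    · intro hy
      rcases orel_insert_swap hy with hy | ⟨h1, h2⟩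
      · exact hy
      · have hx' : orel S x a := h1.elim id fun hb => orel_trans hb (orel_symm h)
        have hy' : orel S y a := h2.elim id fun hb => orel_trans hb (orel_symm h)
        exact orel_trans hx' (orel_symm hy')
    · exact orel_mono (Set.subset_insert _ _)
  have : cls (insert (Equiv.swap a b) S) = cls S := by
    funext x; ext y; simp only [mem_cls]; exact key x y
  unfold N
  rw [this]


lemma orel_singleton {σ : Perm (Fin d)} {x y : Fin d} :
    orel {σ} x y ↔ σ.SameCycle x y := by
  constructor
  · rintro ⟨g, hg, rfl⟩
    obtain ⟨n, rfl⟩ := Subgroup.mem_closure_singleton.mp hg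
    exact ⟨n, rfl⟩
  · rintro ⟨n, h⟩
    exact ⟨σ ^ n, Subgroup.mem_closure_singleton.mpr ⟨n, rfl⟩, h⟩

lemma cls_singleton_fixed {σ : Perm (Fin d)} {x : Fin d} (hx : x ∉ σ.support) :
    cls {σ} x = {x} := by
  ext y
  simp only [mem_cls, orel_singleton, Finset.mem_singleton]
  constructor
  · intro h
    exact (h.eq_of_left (by simpa [Equiv.Perm.mem_support, Function.IsFixedPt] using hx)).symm
  · rintro rfl
    exact Equiv.Perm.SameCycle.refl σ y

lemma cls_singleton_support {σ : Perm (Fin d)} {x : Fin d} (hx : x ∈ σ.support) :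
    cls {σ} x = (σ.cycleOf x).support := by
  ext y
  simp only [mem_cls, orel_singleton, Equiv.Perm.mem_support_cycleOf_iff]
  exact ⟨fun h => ⟨h, hx⟩, fun h => h.1⟩

lemma N_singleton (σ : Perm (Fin d)) : N {σ} = numCycles d σ := by
  classical
  have hu : (univ : Finset (Fin d)) = σ.support ∪ σ.supportᶜ := by
    simp
  have himg : univ.image (cls {σ}) =
      σ.support.image (cls {σ}) ∪ σ.supportᶜ.image (cls {σ}) := by
    rw [hu, Finset.image_union]
  have hdisj : Disjoint (σ.support.image (cls {σ})) (σ.supportᶜ.image (cls {σ})) := by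
    rw [Finset.disjoint_left]
    rintro O hO hO'
    obtain ⟨x, hx, rfl⟩ := Finset.mem_image.mp hO
    obtain ⟨y, hy, he⟩ := Finset.mem_image.mp hO'
    rw [Finset.mem_compl] at hy
    rw [cls_singleton_fixed hy] at he
    have hxx : x ∈ cls {σ} x := mem_cls.mpr (orel_refl _ x)
    rw [← he] at hxx
    rw [Finset.mem_singleton] at hxx
    subst hxx
    exact hy hx
  have hcard2 : (σ.supportᶜ.image (cls {σ})).card = σ.supportᶜ.card := by
    apply Finset.card_image_of_injOn
    intro x hx y hy he
    rw [Finset.mem_coe, Finset.mem_compl] at hx hy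
    rw [cls_singleton_fixed hx, cls_singleton_fixed hy] at he
    exact Finset.singleton_injective he
  have himg1 : σ.support.image (cls {σ}) = σ.cycleFactorsFinset.image Equiv.Perm.support := by
    ext O
    simp only [Finset.mem_image]
    constructor
    · rintro ⟨x, hx, rfl⟩
      exact ⟨σ.cycleOf x, Equiv.Perm.cycleOf_mem_cycleFactorsFinset_iff.mpr hx,
        (cls_singleton_support hx).symm⟩
    · rintro ⟨c, hc, rfl⟩
      have hcne : c.support.Nonempty :=
        (Equiv.Perm.mem_cycleFactorsFinset_iff.mp hc).1.nonempty_support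
      obtain ⟨a, ha⟩ := hcne
      have hceq : c = σ.cycleOf a := Equiv.Perm.cycle_is_cycleOf ha hc
      have has : a ∈ σ.support := Equiv.Perm.mem_cycleFactorsFinset_support_le hc ha
      exact ⟨a, has, by rw [cls_singleton_support has, hceq]⟩
  have hcard1 : (σ.cycleFactorsFinset.image Equiv.Perm.support).card =
      σ.cycleFactorsFinset.card := by
    apply Finset.card_image_of_injOn
    intro c hc c' hc' he
    rw [Finset.mem_coe] at hc hc'
    have hcne : c.support.Nonempty :=
      (Equiv.Perm.mem_cycleFactorsFinset_iff.mp hc).1.nonempty_support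
    obtain ⟨a, ha⟩ := hcne
    have ha' : a ∈ c'.support := he ▸ ha
    rw [Equiv.Perm.cycle_is_cycleOf ha hc, Equiv.Perm.cycle_is_cycleOf ha' hc']
  have hct : σ.cycleType.card = σ.cycleFactorsFinset.card := by
    simp [Equiv.Perm.cycleType]
  have hsum : σ.cycleType.sum = σ.support.card := σ.sum_cycleType
  have hcompl : σ.supportᶜ.card = d - σ.support.card := by
    rw [Finset.card_compl]
    simp
  unfold N numCycles
  rw [himg, Finset.card_union_of_disjoint hdisj, hcard2, himg1, hcard1, hct, hsum, hcompl]

/-- Merging: if a,b are not in the same cycle of σ, they are in the same cycle of σ * swap a b. -/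
lemma sameCycle_mul_swap {σ : Perm (Fin d)} {a b : Fin d} (hab : a ≠ b)
    (h : ¬ σ.SameCycle a b) : (σ * Equiv.swap a b).SameCycle a b := by
  set ρ := σ * Equiv.swap a b with hρ
  have hex : ∃ m, 1 ≤ m ∧ (σ ^ m) b = b := by
    refine ⟨orderOf σ, orderOf_pos σ, ?_⟩
    rw [pow_orderOf_eq_one]; rfl
  classical
  set m := Nat.find hex with hm
  obtain ⟨hm1, hmb⟩ := Nat.find_spec hex
  have key : ∀ k, 1 ≤ k → k ≤ m → (ρ ^ k) a = (σ ^ k) b := by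
    intro k
    induction k with
    | zero => intro h1 _; omega
    | succ k ih =>
      intro _ hk
      by_cases hk0 : k = 0
      · subst hk0
        simp only [zero_add, pow_one, hρ, Equiv.Perm.mul_apply, Equiv.swap_apply_left]
      · have hk1 : 1 ≤ k := by omega
        have hkm : k ≤ m := by omega
        have hkm' : k < m := by omega
        have hne_b : (σ ^ k) b ≠ b := by
          intro he
          exact (Nat.find_min hex hkm') ⟨hk1, he⟩
        have hne_a : (σ ^ k) b ≠ a := by
          intro he
          exact h (Equiv.Perm.SameCycle.symm ⟨(k : ℤ), by rw [zpow_natCast, he]⟩)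
        have : ρ ^ (k + 1) = ρ * ρ ^ k := by rw [pow_succ']
        rw [this, Equiv.Perm.mul_apply, ih hk1 hkm, hρ, Equiv.Perm.mul_apply,
          Equiv.swap_apply_of_ne_of_ne hne_a hne_b, ← Equiv.Perm.mul_apply, ← pow_succ']
  have : (ρ ^ m) a = b := by rw [key m hm1 le_rfl, hmb]
  exact ⟨(m : ℤ), by rw [zpow_natCast, this]⟩

/-- Parity of cycle counts along a product of swaps. -/
lemma parity_lemma (σ : Perm (Fin d)) (l : List (Perm (Fin d))) (hl : ∀ τ ∈ l, τ.IsSwap) :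
    Even (numCycles d σ + numCycles d (σ * l.prod) + l.length) := by
  have hsign : Equiv.Perm.sign (σ * l.prod) = Equiv.Perm.sign σ * (-1) ^ l.length := by
    rw [map_mul, Equiv.Perm.sign_prod_list_swap hl]
  set e₀ := σ.cycleType.sum + Multiset.card σ.cycleType with he₀
  set e₁ := (σ * l.prod).cycleType.sum + Multiset.card (σ * l.prod).cycleType with he₁
  have hs0 : Equiv.Perm.sign σ = (-1 : ℤˣ) ^ e₀ := σ.sign_of_cycleType
  have hs1 : Equiv.Perm.sign (σ * l.prod) = (-1 : ℤˣ) ^ e₁ := (σ * l.prod).sign_of_cycleType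
  have hpow : ((-1 : ℤˣ)) ^ (e₁ + (e₀ + l.length)) = 1 := by
    rw [pow_add, ← hs1, hsign, hs0, ← pow_add]
    rw [← pow_add, ← two_mul]
    rw [pow_mul]
    norm_num
  have heven : Even (e₁ + (e₀ + l.length)) := by
    rwa [neg_one_pow_eq_one_iff_even (by decide : (-1 : ℤˣ) ≠ 1)] at hpow
  have h0 : numCycles d σ + e₀ = d + 2 * Multiset.card σ.cycleType := by
    have hle : σ.cycleType.sum ≤ d := by
      rw [σ.sum_cycleType]
      simpa using Finset.card_le_univ σ.support
    unfold numCycles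
    omega
  have h1 : numCycles d (σ * l.prod) + e₁ =
      d + 2 * Multiset.card (σ * l.prod).cycleType := by
    have hle : (σ * l.prod).cycleType.sum ≤ d := by
      rw [Equiv.Perm.sum_cycleType]
      simpa using Finset.card_le_univ (σ * l.prod).support
    unfold numCycles
    omega
  rw [Nat.even_iff] at heven ⊢
  omega


lemma closure_insert_insert (σ τ : Perm (Fin d)) (hτ : τ * τ = 1) (L : Set (Perm (Fin d))) :
    Subgroup.closure (insert σ (insert τ L)) =
      Subgroup.closure (insert (σ * τ) (insert τ L)) := by
  apply le_antisymm <;> rw [Subgroup.closure_le] <;> rintro x (rfl | hx)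
  · have h1 : x * τ ∈ Subgroup.closure (insert (x * τ) (insert τ L)) :=
      Subgroup.subset_closure (Set.mem_insert _ _)
    have h2 : τ ∈ Subgroup.closure (insert (x * τ) (insert τ L)) :=
      Subgroup.subset_closure (Set.mem_insert_of_mem _ (Set.mem_insert _ _))
    have he : (x * τ) * τ = x := by rw [mul_assoc, hτ, mul_one]
    have hm := Subgroup.mul_mem _ h1 h2
    rw [he] at hm
    exact SetLike.mem_coe.mpr hm
  · exact SetLike.mem_coe.mpr (Subgroup.subset_closure (Set.mem_insert_of_mem _ hx))
  · have h1 : σ ∈ Subgroup.closure (insert σ (insert τ L)) :=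
      Subgroup.subset_closure (Set.mem_insert _ _)
    have h2 : τ ∈ Subgroup.closure (insert σ (insert τ L)) :=
      Subgroup.subset_closure (Set.mem_insert_of_mem _ (Set.mem_insert _ _))
    exact SetLike.mem_coe.mpr (Subgroup.mul_mem _ h1 h2)
  · exact SetLike.mem_coe.mpr (Subgroup.subset_closure (Set.mem_insert_of_mem _ hx))

lemma main_lemma (l : List (Perm (Fin d))) :
    ∀ σ₀ : Perm (Fin d), (∀ τ ∈ l, τ.IsSwap) →
      numCycles d σ₀ + numCycles d (σ₀ * l.prod) ≤
        l.length + 2 * N (insert σ₀ {τ | τ ∈ l}) := by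
  induction l with
  | nil =>
    intro σ _
    have hset : (insert σ {τ | τ ∈ ([] : List (Perm (Fin d)))} : Set _) = {σ} := by
      simp
    rw [hset, N_singleton]
    simp only [List.prod_nil, mul_one, List.length_nil]
    omega
  | cons τ l' ih =>
    intro σ₀ hl
    obtain ⟨a, b, hab, rfl⟩ := hl τ List.mem_cons_self
    set L : Set (Perm (Fin d)) := {τ | τ ∈ l'} with hL
    set σ₁ : Perm (Fin d) := σ₀ * Equiv.swap a b with hσ₁
    have hτ2 : Equiv.swap a b * Equiv.swap a b = 1 := Equiv.swap_mul_self a b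
    have hset : ({x | x ∈ Equiv.swap a b :: l'} : Set (Perm (Fin d))) =
        insert (Equiv.swap a b) L := by
      ext x; simp [List.mem_cons, hL]
    have hprod : σ₀ * (Equiv.swap a b :: l').prod = σ₁ * l'.prod := by
      rw [List.prod_cons, ← mul_assoc]
    have hA : N (insert σ₀ (insert (Equiv.swap a b) L)) =
        N (insert (Equiv.swap a b) (insert σ₁ L)) := by
      rw [N_congr (closure_insert_insert σ₀ _ hτ2 L), Set.insert_comm]
    have hNs : N (insert (Equiv.swap a b) ({σ₀} : Set (Perm (Fin d)))) =
        N (insert (Equiv.swap a b) ({σ₁} : Set (Perm (Fin d)))) := by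
      have e1 : (insert (Equiv.swap a b) ({σ₀} : Set (Perm (Fin d)))) =
          insert σ₀ (insert (Equiv.swap a b) (∅ : Set (Perm (Fin d)))) := by
        simp only [insert_empty_eq]
        exact Set.pair_comm _ _
      have e2 : (insert (Equiv.swap a b) ({σ₁} : Set (Perm (Fin d)))) =
          insert σ₁ (insert (Equiv.swap a b) (∅ : Set (Perm (Fin d)))) := by
        simp only [insert_empty_eq]
        exact Set.pair_comm _ _
      rw [e1, e2]
      exact N_congr (closure_insert_insert σ₀ _ hτ2 ∅)
    have hIH := ih σ₁ fun τ ht => hl τ (List.mem_cons_of_mem _ ht)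
    rw [List.length_cons, hset, hprod, hA]
    by_cases hcase : orel {σ₁} a b
    · -- a, b in the same cycle of σ₁
      have horel : orel (insert σ₁ L) a b :=
        orel_mono (Set.singleton_subset_iff.mpr (Set.mem_insert _ _)) hcase
      have hBA : N (insert (Equiv.swap a b) (insert σ₁ L)) = N (insert σ₁ L) :=
        N_insert_swap_eq horel
      have hσ₀ : numCycles d σ₀ ≤ numCycles d σ₁ + 1 := by
        calc numCycles d σ₀ = N {σ₀} := (N_singleton σ₀).symm
          _ ≤ N (insert (Equiv.swap a b) {σ₀}) + 1 := N_le_insert_swap _ a b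
          _ = N (insert (Equiv.swap a b) {σ₁}) + 1 := by rw [hNs]
          _ = N {σ₁} + 1 := by rw [N_insert_swap_eq hcase]
          _ = numCycles d σ₁ + 1 := by rw [N_singleton]
      omega
    · -- a, b in different cycles of σ₁, hence in the same cycle of σ₀
      have hsc : ¬ σ₁.SameCycle a b := fun h => hcase (orel_singleton.mpr h)
      have hσ₀eq : σ₁ * Equiv.swap a b = σ₀ := by rw [hσ₁, mul_assoc, hτ2, mul_one]
      have h2 : orel {σ₀} a b :=
        orel_singleton.mpr (hσ₀eq ▸ sameCycle_mul_swap hab hsc)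
      have hσ₀le : numCycles d σ₀ ≤ numCycles d σ₁ := by
        calc numCycles d σ₀ = N {σ₀} := (N_singleton σ₀).symm
          _ = N (insert (Equiv.swap a b) {σ₀}) := (N_insert_swap_eq h2).symm
          _ = N (insert (Equiv.swap a b) {σ₁}) := hNs
          _ ≤ N {σ₁} := N_antitone (Set.subset_insert _ _)
          _ = numCycles d σ₁ := N_singleton σ₁
      have hpar := parity_lemma σ₁ [Equiv.swap a b]
        (fun τ ht => by rw [List.mem_singleton] at ht; exact ht ▸ ⟨a, b, hab, rfl⟩)
      rw [List.prod_singleton, hσ₀eq] at hpar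
      have hlt : numCycles d σ₀ < numCycles d σ₁ := by
        rw [Nat.even_iff] at hpar
        rcases Nat.lt_or_ge (numCycles d σ₀) (numCycles d σ₁) with h | h
        · exact h
        · simp only [List.length_singleton] at hpar; omega
      have hB : N (insert σ₁ L) ≤ N (insert (Equiv.swap a b) (insert σ₁ L)) + 1 :=
        N_le_insert_swap _ a b
      omega

end TWG

/-- If there is an r-step transitive walk in the transposition Cayley graph of S(d)
from a permutation of cycle type α to one of cycle type β, then
r ≥ ℓ(α) + ℓ(β) - 2, and combined with the parity constraint the genus
g = (r + 2 - ℓ(α) - ℓ(β))/2 is a nonnegative integer. -/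
theorem transitive_walk_genus (d : ℕ) (σ₀ : Equiv.Perm (Fin d))
    (l : List (Equiv.Perm (Fin d))) (hl : ∀ τ ∈ l, τ.IsSwap)
    (htrans : ∀ x y : Fin d,
      ∃ g ∈ Subgroup.closure (insert σ₀ {τ | τ ∈ l}), g x = y) :
    numCycles d σ₀ + numCycles d (σ₀ * l.prod) ≤ l.length + 2 ∧
    ∃ g : ℕ, l.length + 2 = 2 * g + numCycles d σ₀ + numCycles d (σ₀ * l.prod) := by
  have hN : TWG.N (insert σ₀ {τ | τ ∈ l}) ≤ 1 := by
    apply Finset.card_le_one.mpr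
    intro O hO O' hO'
    obtain ⟨x, -, rfl⟩ := Finset.mem_image.mp hO
    obtain ⟨y, -, rfl⟩ := Finset.mem_image.mp hO'
    obtain ⟨g, hg, hgx⟩ := htrans x y
    exact TWG.cls_eq_of_orel ⟨g, hg, hgx⟩
  have hmain := TWG.main_lemma l σ₀ hl
  have hineq : numCycles d σ₀ + numCycles d (σ₀ * l.prod) ≤ l.length + 2 := by omega
  refine ⟨hineq, ?_⟩
  obtain ⟨c, hc⟩ := TWG.parity_lemma σ₀ l hl
  exact ⟨c + 1 - numCycles d σ₀ - numCycles d (σ₀ * l.prod), by omega⟩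
end
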